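/- Let I ⊆ ℚ[X] = ℚ[x₁,…,x_n] be a zero-dimensional ideal, let f_n ∈ ℚ[x_n] satisfy ⟨f_n⟩ = I ∩ ℚ[x_n], and let g_n be the squarefree part of f_n. If deg(f_n) = dim_ℚ(ℚ[X]/I), then √I = ⟨I, g_n⟩. -/

import Mathlib

open MvPolynomial

/-- **Proposition.** Let `I ⊆ ℚ[x₁,…,xₙ]` be a zero-dimensional ideal, `⟨fₙ⟩ = I ∩ ℚ[xₙ]`,
and let `gₙ` be the squarefree part of `fₙ` (characterized up to a constant by: `gₙ`
squarefree, `gₙ ∣ fₙ` and `fₙ ∣ gₙᵏ` for some `k`). If `deg fₙ = dim_ℚ ℚ[X]/I` then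
`√I = ⟨I, gₙ⟩`. -/
theorem statement6 (n : ℕ) (I : Ideal (MvPolynomial (Fin (n + 1)) ℚ))
    (hfin : Module.Finite ℚ (MvPolynomial (Fin (n + 1)) ℚ ⧸ I))
    (fn gn : Polynomial ℚ)
    (hfn : Ideal.comap (Polynomial.aeval (X (Fin.last n) : MvPolynomial (Fin (n + 1)) ℚ)) I
      = Ideal.span {fn})
    (hg_sqfree : Squarefree gn)
    (hg_dvd : gn ∣ fn)
    (hg_rad : ∃ k : ℕ, fn ∣ gn ^ k)
    (hdeg : fn.natDegree = Module.finrank ℚ (MvPolynomial (Fin (n + 1)) ℚ ⧸ I)) :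
    I.radical = I ⊔ Ideal.span
      {Polynomial.aeval (X (Fin.last n) : MvPolynomial (Fin (n + 1)) ℚ) gn} := by
  set A := MvPolynomial (Fin (n + 1)) ℚ
  set av : Polynomial ℚ →ₐ[ℚ] A := Polynomial.aeval (X (Fin.last n) : A)
  -- fn ≠ 0
  have hfn0 : fn ≠ 0 := by
    rintro rfl
    have h1 : Module.finrank ℚ (A ⧸ I) = 0 := by simpa using hdeg.symm
    haveI := hfin
    haveI : Subsingleton (A ⧸ I) := Module.finrank_zero_iff.mp h1
    have h1I : (1 : A) ∈ I :=
      Ideal.Quotient.eq_zero_iff_mem.mp (Subsingleton.elim _ _)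
    have h1c : (1 : Polynomial ℚ) ∈ Ideal.comap av I :=
      Ideal.mem_comap.mpr (by simpa using h1I)
    rw [hfn] at h1c
    simp only [Ideal.span_singleton_eq_bot.mpr rfl, Ideal.mem_bot] at h1c
    exact one_ne_zero h1c
  -- the algebra hom to the quotient
  set φ : Polynomial ℚ →ₐ[ℚ] A ⧸ I := (Ideal.Quotient.mkₐ ℚ I).comp av with hφ
  have hker : RingHom.ker φ = Ideal.span {fn} := by
    rw [← hfn]
    ext p
    rw [RingHom.mem_ker, Ideal.mem_comap]
    show Ideal.Quotient.mk I (av p) = 0 ↔ _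
    rw [Ideal.Quotient.eq_zero_iff_mem]
  -- surjectivity of φ
  have hsurj : Function.Surjective φ := by
    haveI := hfin
    have hinj := Ideal.kerLiftAlg_injective φ
    set e : (Polynomial ℚ ⧸ RingHom.ker φ) ≃ₐ[ℚ] AdjoinRoot fn :=
      Ideal.quotientEquivAlgOfEq ℚ hker
    haveI : FiniteDimensional ℚ (AdjoinRoot fn) :=
      (AdjoinRoot.powerBasis hfn0).finite
    haveI : FiniteDimensional ℚ (Polynomial ℚ ⧸ RingHom.ker φ) :=
      Module.Finite.equiv e.symm.toLinearEquiv
    have hrank : Module.finrank ℚ (Polynomial ℚ ⧸ RingHom.ker φ)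
        = Module.finrank ℚ (A ⧸ I) := by
      rw [e.toLinearEquiv.finrank_eq, (AdjoinRoot.powerBasis hfn0).finrank, ← hdeg]
      rfl
    have hsurj' : Function.Surjective (Ideal.kerLiftAlg φ) := by
      have := (LinearMap.injective_iff_surjective_of_finrank_eq_finrank
        (f := (Ideal.kerLiftAlg φ).toLinearMap) hrank).mp hinj
      exact this
    intro x
    obtain ⟨y, hy⟩ := hsurj' x
    obtain ⟨p, rfl⟩ := Ideal.Quotient.mk_surjective y
    exact ⟨p, by simpa [Ideal.kerLiftAlg_mk] using hy⟩
  -- main proof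
  ext a
  constructor
  · intro ha
    obtain ⟨m, hm⟩ := ha
    obtain ⟨p, hp⟩ := hsurj (Ideal.Quotient.mk I a)
    have hpI : a - av p ∈ I := by
      rw [← Ideal.Quotient.eq_zero_iff_mem]
      simp only [map_sub]
      rw [sub_eq_zero]
      have : φ p = Ideal.Quotient.mk I a := hp
      simpa [φ] using this.symm
    rcases Nat.eq_zero_or_pos m with rfl | hm0
    · have h1 : (1 : A) ∈ I := by simpa using hm
      exact Submodule.mem_sup_left (I.eq_top_iff_one.mpr h1 ▸ Submodule.mem_top)
    · -- (av p)^m ∈ I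
      have hpm : (av p) ^ m ∈ I := by
        have h1 : a ^ m - (av p) ^ m ∈ I := by
          obtain ⟨c, hc⟩ := sub_dvd_pow_sub_pow a (av p) m
          rw [hc]
          exact I.mul_mem_right c hpI
        have := I.sub_mem hm h1
        simpa using this
      have : p ^ m ∈ Ideal.comap av I := Ideal.mem_comap.mpr (by simpa using hpm)
      rw [hfn, Ideal.mem_span_singleton] at this
      have hgp : gn ∣ p :=
        (hg_sqfree.dvd_pow_iff_dvd hm0.ne').mp
          (dvd_trans hg_dvd this)
      obtain ⟨q, rfl⟩ := hgp
      have : av (gn * q) ∈ Ideal.span {av gn} := by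
        rw [map_mul]
        exact Ideal.mem_span_singleton.mpr ⟨av q, rfl⟩
      have := Submodule.add_mem_sup hpI this
      simpa using this
  · intro ha
    refine (sup_le (Ideal.le_radical) ?_ : I ⊔ Ideal.span {av gn} ≤ I.radical) ha
    rw [Ideal.span_le, Set.singleton_subset_iff]
    obtain ⟨k, hk⟩ := hg_rad
    refine ⟨k, ?_⟩
    have : gn ^ k ∈ Ideal.span {fn} := Ideal.mem_span_singleton.mpr hk
    rw [← hfn, Ideal.mem_comap] at this
    simpa using this
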